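/- Let σ₁, σ_i > 0, h_i real with h_i²σ_i² ≤ σ₁². Let X be a real random variable with E[X²] ≤ P, and let N_i ~ N(0, σ_i²), N₁ ~ N(0, σ₁²) be independent of X. Then for any (measurable) random variable W with W → X → (noise channels) Markov structure, I(W ; X + N_i) ≥ I(W ; h_i X + N₁). Equivalently, h_i X + N₁ is a stochastically degraded version of X + N_i. -/

import Mathlib

open MeasureTheory ProbabilityTheory
open scoped ENNReal NNReal

section StmtAux
open Real
open scoped ENNReal NNReal

lemma gauss_mul_key (a b : ℝ≥0) (ha : a ≠ 0) (hb : b ≠ 0) (z x : ℝ) :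
    gaussianPDFReal 0 a x * gaussianPDFReal 0 b (z - x)
      = ((Real.sqrt (2*π*a))⁻¹ * (Real.sqrt (2*π*b))⁻¹ * Real.exp (-z^2/(2*((a:ℝ)+(b:ℝ)))))
        * Real.exp (-(((a:ℝ)+(b:ℝ))/(2*(a:ℝ)*(b:ℝ))) * (x - (a:ℝ)*z/((a:ℝ)+(b:ℝ)))^2) := by
  have hA : (0:ℝ) < a := by positivity
  have hB : (0:ℝ) < b := by positivity
  have hAB : (0:ℝ) < (a:ℝ) + b := by positivity
  have hexp : -x^2/(2*(a:ℝ)) + -(z-x)^2/(2*(b:ℝ))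
      = -z^2/(2*((a:ℝ)+(b:ℝ))) + -(((a:ℝ)+(b:ℝ))/(2*(a:ℝ)*(b:ℝ))) * (x - (a:ℝ)*z/((a:ℝ)+(b:ℝ)))^2 := by
    field_simp
    ring
  simp only [gaussianPDFReal, sub_zero]
  calc ((Real.sqrt (2*π*a))⁻¹ * rexp (-x^2/(2*(a:ℝ)))) * ((Real.sqrt (2*π*b))⁻¹ * rexp (-(z-x)^2/(2*(b:ℝ))))
      = (Real.sqrt (2*π*a))⁻¹ * (Real.sqrt (2*π*b))⁻¹ * rexp (-x^2/(2*(a:ℝ)) + -(z-x)^2/(2*(b:ℝ))) := by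
        rw [Real.exp_add]; ring
    _ = _ := by rw [hexp, Real.exp_add]; ring

lemma gauss_conv_pdf_real (a b : ℝ≥0) (ha : a ≠ 0) (hb : b ≠ 0) (z : ℝ) :
    ∫ x, gaussianPDFReal 0 a x * gaussianPDFReal 0 b (z - x)
      = gaussianPDFReal 0 (a + b) z := by
  have hA : (0:ℝ) < a := by positivity
  have hB : (0:ℝ) < b := by positivity
  have hAB : (0:ℝ) < (a:ℝ) + b := by positivity
  have hβ : (0:ℝ) < ((a:ℝ)+(b:ℝ))/(2*(a:ℝ)*(b:ℝ)) := by positivity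
  simp_rw [gauss_mul_key a b ha hb z]
  rw [MeasureTheory.integral_const_mul]
  rw [integral_sub_right_eq_self (μ := volume)
      (fun x => Real.exp (-(((a:ℝ)+(b:ℝ))/(2*(a:ℝ)*(b:ℝ))) * x^2)) ((a:ℝ)*z/((a:ℝ)+(b:ℝ)))]
  rw [integral_gaussian]
  have hconst : (Real.sqrt (2*π*a))⁻¹ * (Real.sqrt (2*π*b))⁻¹
        * Real.sqrt (π / (((a:ℝ)+(b:ℝ))/(2*(a:ℝ)*(b:ℝ))))
      = (Real.sqrt (2*π*((a:ℝ)+(b:ℝ))))⁻¹ := by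
    rw [← Real.sqrt_inv, ← Real.sqrt_inv, ← Real.sqrt_inv,
      ← Real.sqrt_mul (by positivity), ← Real.sqrt_mul (by positivity)]
    congr 1
    have hπ : (0:ℝ) < π := Real.pi_pos
    field_simp
  rw [gaussianPDFReal]
  push_cast
  rw [sub_zero, ← hconst]
  ring

lemma gauss_conv_integrable (a b : ℝ≥0) (ha : a ≠ 0) (hb : b ≠ 0) (z : ℝ) :
    Integrable (fun x => gaussianPDFReal 0 a x * gaussianPDFReal 0 b (z - x)) := by
  have hA : (0:ℝ) < a := by positivity
  have hB : (0:ℝ) < b := by positivity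
  have hβ : (0:ℝ) < ((a:ℝ)+(b:ℝ))/(2*(a:ℝ)*(b:ℝ)) := by positivity
  simp_rw [gauss_mul_key a b ha hb z]
  exact ((integrable_exp_neg_mul_sq hβ).comp_sub_right ((a:ℝ)*z/((a:ℝ)+(b:ℝ)))).const_mul _

lemma lintegral_gauss_conv (a b : ℝ≥0) (ha : a ≠ 0) (hb : b ≠ 0) (z : ℝ) :
    ∫⁻ x, gaussianPDF 0 a x * gaussianPDF 0 b (z - x) = gaussianPDF 0 (a + b) z := by
  simp_rw [gaussianPDF, ← ENNReal.ofReal_mul (gaussianPDFReal_nonneg _ _ _)]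
  rw [← ofReal_integral_eq_lintegral_ofReal (gauss_conv_integrable a b ha hb z)
      (Filter.Eventually.of_forall fun x =>
        mul_nonneg (gaussianPDFReal_nonneg _ _ _) (gaussianPDFReal_nonneg _ _ _))]
  exact congrArg ENNReal.ofReal (gauss_conv_pdf_real a b ha hb z)

lemma gaussianReal_conv_gaussianReal (a b : ℝ≥0) :
    Measure.conv (gaussianReal 0 a) (gaussianReal 0 b) = gaussianReal 0 (a + b) := by
  rcases eq_or_ne a 0 with rfl | ha
  · rw [gaussianReal_zero_var, zero_add]
    exact Measure.dirac_zero_conv _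
  rcases eq_or_ne b 0 with rfl | hb
  · rw [gaussianReal_zero_var, add_zero]
    exact Measure.conv_dirac_zero _
  have hab : a + b ≠ 0 := by simp [ha]
  rw [gaussianReal_of_var_ne_zero _ ha, gaussianReal_of_var_ne_zero _ hb,
    gaussianReal_of_var_ne_zero _ hab]
  ext s hs
  rw [Measure.conv, Measure.map_apply measurable_add hs,
    Measure.prod_apply (measurable_add hs), withDensity_apply _ hs]
  have h1 : ∀ x : ℝ, (volume.withDensity (gaussianPDF 0 b))
      (Prod.mk x ⁻¹' ((fun p : ℝ × ℝ => p.1 + p.2) ⁻¹' s))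
      = ∫⁻ z in s, gaussianPDF 0 b (z - x) := by
    intro x
    have hpre : (Prod.mk x ⁻¹' ((fun p : ℝ × ℝ => p.1 + p.2) ⁻¹' s))
        = (fun y => x + y) ⁻¹' s := rfl
    rw [hpre, withDensity_apply _ ((measurable_const_add x) hs)]
    have := (measurePreserving_add_left (volume : Measure ℝ) x).setLIntegral_comp_preimage
      (s := s) hs (f := fun z => gaussianPDF 0 b (z - x))
      ((measurable_gaussianPDF 0 b).comp (measurable_sub_const x))
    simp only [add_sub_cancel_left] at this
    exact this
  calc ∫⁻ x, (volume.withDensity (gaussianPDF 0 b))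
        (Prod.mk x ⁻¹' ((fun p : ℝ × ℝ => p.1 + p.2) ⁻¹' s))
        ∂(volume.withDensity (gaussianPDF 0 a))
      = ∫⁻ x, gaussianPDF 0 a x * ∫⁻ z in s, gaussianPDF 0 b (z - x) := by
        simp_rw [h1]
        rw [lintegral_withDensity_eq_lintegral_mul _ (measurable_gaussianPDF 0 a)]
        · rfl
        · exact Measurable.lintegral_prod_right'
            (f := fun p : ℝ × ℝ => gaussianPDF 0 b (p.2 - p.1))
            ((measurable_gaussianPDF 0 b).comp (measurable_snd.sub measurable_fst))
    _ = ∫⁻ x, ∫⁻ z in s, gaussianPDF 0 a x * gaussianPDF 0 b (z - x) := by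
        congr 1; ext x
        rw [lintegral_const_mul (f := fun z => gaussianPDF 0 b (z - x)) _ ((measurable_gaussianPDF 0 b).comp (measurable_sub_const x))]
    _ = ∫⁻ z in s, ∫⁻ x, gaussianPDF 0 a x * gaussianPDF 0 b (z - x) := by
        rw [lintegral_lintegral_swap]
        exact (((measurable_gaussianPDF 0 a).comp measurable_fst).mul
          ((measurable_gaussianPDF 0 b).comp (measurable_snd.sub measurable_fst))).aemeasurable
    _ = ∫⁻ z in s, gaussianPDF 0 (a + b) z := by
        congr 1; ext z
        exact lintegral_gauss_conv a b ha hb z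

lemma conv_assoc' (μ ν ρ : Measure ℝ) [SFinite μ] [SFinite ν] [SFinite ρ] :
    Measure.conv (Measure.conv μ ν) ρ = Measure.conv μ (Measure.conv ν ρ) := by
  simp only [Measure.conv]
  conv_lhs => rw [show ρ = Measure.map id ρ from (Measure.map_id).symm]
  rw [Measure.map_prod_map _ _ measurable_add measurable_id,
    Measure.map_map measurable_add (measurable_add.prodMap measurable_id)]
  conv_rhs => rw [show μ = Measure.map id μ from (Measure.map_id).symm]
  rw [Measure.map_prod_map _ _ measurable_id measurable_add,
    Measure.map_map measurable_add (measurable_id.prodMap measurable_add),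
    ← Measure.prodAssoc_prod,
    Measure.map_map (measurable_add.comp (measurable_id.prodMap measurable_add))
      MeasurableEquiv.prodAssoc.measurable]
  congr 1
  ext p
  simp [Function.comp, Prod.map, MeasurableEquiv.prodAssoc, add_assoc]

lemma map_add_eq_conv' {Ω : Type*} [MeasureSpace Ω] [IsProbabilityMeasure (ℙ : Measure Ω)]
    {f g : Ω → ℝ} (hf : Measurable f) (hg : Measurable g) (h : IndepFun f g ℙ) :
    Measure.map (fun ω => f ω + g ω) ℙ
      = Measure.conv (Measure.map f ℙ) (Measure.map g ℙ) := by
  have hmap := (ProbabilityTheory.indepFun_iff_map_prod_eq_prod_map_map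
    hf.aemeasurable hg.aemeasurable).mp h
  rw [Measure.conv, ← hmap, Measure.map_map measurable_add (hf.prodMk hg)]
  rfl

end StmtAux

/-- Lemma 1 of the paper (degradedness of the many-to-one X channel): if
h²σᵢ² ≤ σ₁², then h·X + N₁ is a stochastically degraded version of X + Nᵢ, i.e.
the law of h·X + N₁ coincides with the law of h·(X + Nᵢ) further corrupted by an
independent Gaussian noise of variance σ₁² - h²σᵢ².  (By the data processing
inequality this yields I(W ; X+Nᵢ) ≥ I(W ; hX+N₁) for any W → X Markov input.) -/
theorem stmt_15 {Ω : Type*} [MeasureSpace Ω] [IsProbabilityMeasure (ℙ : Measure Ω)]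
    (h σ1 σi Pw : ℝ) (hσ1 : 0 < σ1) (hσi : 0 < σi) (hdeg : h^2 * σi^2 ≤ σ1^2)
    (X Ni N1 : Ω → ℝ) (hX : Measurable X) (hNi : Measurable Ni) (hN1 : Measurable N1)
    (hX2 : ∫ ω, (X ω)^2 ≤ Pw)
    (hNid : Measure.map Ni ℙ = gaussianReal 0 ⟨σi^2, sq_nonneg σi⟩)
    (hN1d : Measure.map N1 ℙ = gaussianReal 0 ⟨σ1^2, sq_nonneg σ1⟩)
    (hind1 : IndepFun X Ni ℙ)
    (hind2 : IndepFun (fun ω => (X ω, Ni ω)) N1 ℙ) :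
    Measure.map (fun ω => h * X ω + N1 ω) ℙ =
      Measure.map (fun p : ℝ × ℝ => p.1 + p.2)
        ((Measure.map (fun ω => h * (X ω + Ni ω)) ℙ).prod
          (gaussianReal 0 (Real.toNNReal (σ1^2 - h^2*σi^2)))) := by
  have hhX : Measurable fun ω => h * X ω := hX.const_mul h
  haveI : IsProbabilityMeasure (Measure.map (fun ω => h * X ω) ℙ) :=
    Measure.isProbabilityMeasure_map hhX.aemeasurable
  have hindXN1 : IndepFun X N1 ℙ := hind2.comp measurable_fst measurable_id
  have hindhXN1 : IndepFun (fun ω => h * X ω) N1 ℙ :=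
    hindXN1.comp (measurable_const_mul h) measurable_id
  have hindhXhNi : IndepFun (fun ω => h * X ω) (fun ω => h * Ni ω) ℙ :=
    hind1.comp (measurable_const_mul h) (measurable_const_mul h)
  have hhNi : Measure.map (fun ω => h * Ni ω) ℙ
      = gaussianReal 0 (⟨h^2, sq_nonneg h⟩ * ⟨σi^2, sq_nonneg σi⟩) := by
    have h2 : Measure.map (fun ω => h * Ni ω) ℙ
        = Measure.map (fun x : ℝ => h * x) (Measure.map Ni ℙ) :=
      (Measure.map_map (measurable_const_mul h) hNi).symm
    rw [h2, hNid, gaussianReal_map_const_mul (μ := 0) (v := (⟨σi^2, sq_nonneg σi⟩ : ℝ≥0)), mul_zero]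
    rfl
  have hvar : (⟨h^2, sq_nonneg h⟩ * ⟨σi^2, sq_nonneg σi⟩ : ℝ≥0)
      + Real.toNNReal (σ1^2 - h^2*σi^2) = ⟨σ1^2, sq_nonneg σ1⟩ := by
    apply NNReal.coe_injective
    push_cast
    rw [Real.coe_toNNReal _ (by linarith)]
    change h^2*σi^2 + (σ1^2 - h^2*σi^2) = σ1^2
    ring
  have hInner : Measure.map (fun ω => h * (X ω + Ni ω)) ℙ
      = Measure.conv (Measure.map (fun ω => h * X ω) ℙ)
          (gaussianReal 0 (⟨h^2, sq_nonneg h⟩ * ⟨σi^2, sq_nonneg σi⟩)) := by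
    simp_rw [mul_add]
    rw [map_add_eq_conv' hhX (hNi.const_mul h) hindhXhNi, hhNi]
  show _ = Measure.conv (Measure.map (fun ω => h * (X ω + Ni ω)) ℙ)
      (gaussianReal 0 (Real.toNNReal (σ1^2 - h^2*σi^2)))
  rw [hInner, conv_assoc', _root_.gaussianReal_conv_gaussianReal, hvar,
    map_add_eq_conv' hhX hN1 hindhXN1, hN1d]
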